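/- Let (Ω, 𝔄, ν) be a measure space with ν a finite measure, and let u : Ω → ℝ be measurable with u(x) ≤ 0 for all x ∈ Ω. Assume that ν({x ∈ Ω : u(x) < −s}) > 0 for every s > 0. Then there exists a monotone increasing function χ₀ : (−∞, 0] → (−∞, 0] with χ₀(0) < 0 and lim_{t → −∞} χ₀(t) = −∞ such that ∫_Ω (−χ₀(u(x))) dν(x) = +∞. -/
import Mathlib


open Set MeasureTheory ENNReal Filter

/-- Let `(Ω, 𝔄, ν)` be a finite measure space and `u : Ω → ℝ` measurable
with `u ≤ 0`, such that `ν({u < -s}) > 0` for every `s > 0`. Then there exists a monotone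
increasing function `χ₀ : (-∞, 0] → (-∞, 0]` with `χ₀(0) < 0` and `χ₀(t) → -∞` as
`t → -∞`, such that `∫_Ω (-χ₀(u(x))) dν(x) = +∞`. -/
theorem exists_weight_with_infinite_energy
    {Ω : Type*} [MeasurableSpace Ω] (ν : Measure Ω) [IsFiniteMeasure ν]
    (u : Ω → ℝ) (hu : Measurable u) (hu0 : ∀ x, u x ≤ 0)
    (hpos : ∀ s > (0 : ℝ), 0 < ν {x | u x < -s}) :
    ∃ χ₀ : ℝ → ℝ,
      MonotoneOn χ₀ (Set.Iic 0) ∧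
      (∀ t ≤ (0 : ℝ), χ₀ t ≤ 0) ∧
      χ₀ 0 < 0 ∧
      Tendsto χ₀ atBot atBot ∧
      ∫⁻ x, ENNReal.ofReal (-(χ₀ (u x))) ∂ν = ⊤ := by
  -- `a n` is the (positive, finite) measure of `{u < -(n+1)}`
  set a : ℕ → ℝ := fun n => (ν {x | u x < -((n : ℝ) + 1)}).toReal with ha_def
  have ha_pos : ∀ n, 0 < a n := by
    intro n
    have h1 : (0 : ℝ) < (n : ℝ) + 1 := by positivity
    exact ENNReal.toReal_pos (hpos _ h1).ne' (measure_ne_top ν _)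
  have ha_anti : ∀ ⦃n m : ℕ⦄, n ≤ m → a m ≤ a n := by
    intro n m hnm
    apply ENNReal.toReal_mono (measure_ne_top ν _)
    apply measure_mono
    intro x hx
    simp only [Set.mem_setOf_eq] at hx ⊢
    have : (n : ℝ) ≤ (m : ℝ) := Nat.cast_le.2 hnm
    linarith
  -- the slopes `c n`
  set c : ℕ → ℝ := fun n => ((n : ℝ) + 1) / a n with hc_def
  have hc_pos : ∀ n, 0 < c n := fun n => div_pos (by positivity) (ha_pos n)
  have hc_mono : Monotone c := by
    intro n m hnm
    have : (n : ℝ) ≤ (m : ℝ) := Nat.cast_le.2 hnm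
    exact div_le_div₀ (by positivity) (by linarith) (ha_pos m) (ha_anti hnm)
  -- the weight
  refine ⟨fun t => -c (Nat.floor (-t)), ?_, ?_, ?_, ?_, ?_⟩
  · -- monotone
    intro t₁ _ t₂ _ h
    simp only [neg_le_neg_iff]
    exact hc_mono (Nat.floor_mono (by linarith))
  · -- nonpositive
    intro t _
    simp only [Left.neg_nonpos_iff]
    exact (hc_pos _).le
  · -- χ₀ 0 < 0
    simpa using hc_pos (Nat.floor (-(0:ℝ)))
  · -- tendsto atBot
    rw [tendsto_atBot]
    intro b
    obtain ⟨N, hN⟩ := exists_nat_gt ((-b) * a 0)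
    filter_upwards [eventually_le_atBot (-(N : ℝ))] with t ht
    have hfl : N ≤ Nat.floor (-t) := Nat.le_floor (by linarith)
    have h1 : c N ≤ c (Nat.floor (-t)) := hc_mono hfl
    have h2 : ((N : ℝ)) / a 0 ≤ c N :=
      div_le_div₀ (by positivity) (by linarith) (ha_pos N) (ha_anti (Nat.zero_le N))
    have h3 : (-b) < (N : ℝ) / a 0 := by
      rw [lt_div_iff₀ (ha_pos 0)]
      linarith
    linarith
  · -- infinite integral
    have key : ∀ n : ℕ, ((n : ℝ≥0∞)) ≤ ∫⁻ x, ENNReal.ofReal (-(-c (Nat.floor (-(u x))))) ∂ν := by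
      intro n
      set S : Set Ω := {x | u x < -((n : ℝ) + 1)} with hS_def
      have hSm : MeasurableSet S := hu measurableSet_Iio
      have hpt : ∀ x ∈ S, ENNReal.ofReal (c n) ≤ ENNReal.ofReal (-(-c (Nat.floor (-(u x))))) := by
        intro x hx
        simp only [hS_def, Set.mem_setOf_eq] at hx
        rw [neg_neg]
        apply ENNReal.ofReal_le_ofReal
        exact hc_mono (Nat.le_floor (by linarith))
      calc (n : ℝ≥0∞) ≤ ENNReal.ofReal ((n : ℝ) + 1) := by
            rw [show ((n : ℝ≥0∞)) = ENNReal.ofReal (n : ℝ) by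
              simp [ENNReal.ofReal_natCast]]
            exact ENNReal.ofReal_le_ofReal (by linarith)
        _ = ENNReal.ofReal (c n * a n) := by
            rw [hc_def]
            rw [div_mul_cancel₀ _ (ha_pos n).ne']
        _ = ENNReal.ofReal (c n) * ENNReal.ofReal (a n) := by
            rw [ENNReal.ofReal_mul (hc_pos n).le]
        _ = ENNReal.ofReal (c n) * ν S := by
            rw [ha_def]
            simp only []
            rw [ENNReal.ofReal_toReal (measure_ne_top ν _)]
        _ = ∫⁻ _ in S, ENNReal.ofReal (c n) ∂ν := (setLIntegral_const S _).symm
        _ ≤ ∫⁻ x in S, ENNReal.ofReal (-(-c (Nat.floor (-(u x))))) ∂ν := by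
            apply setLIntegral_mono' hSm hpt
        _ ≤ ∫⁻ x, ENNReal.ofReal (-(-c (Nat.floor (-(u x))))) ∂ν :=
            setLIntegral_le_lintegral _ _
    rw [eq_top_iff, ← ENNReal.iSup_natCast]
    exact iSup_le key
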